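/- arXiv:astro-ph/0504067 — 5 statements merged into one kernel-verified Lean document; each statement's English description precedes it below -/
import Mathlib

section
/- For a prolate spheroid with semi-axes a < b (rotation axis b) and eccentricity e defined by e² = 1 - a²/b², the geometrical form-factor L₁ = ((1-e²)/e²)(-1 + (1/(2e))ln((1+e)/(1-e))) satisfies 0 < L₁ < 1/3. -/
lemma artanh_gt (x : ℝ) (hx : 0 < x) (hx1 : x < 1) :
    2 * x < Real.log (1 + x) - Real.log (1 - x) := by
  set f : ℝ → ℝ := fun y => Real.log (1 + y) - Real.log (1 - y) - 2 * y with hf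
  have key : StrictMonoOn f (Set.Icc 0 x) := by
    apply strictMonoOn_of_deriv_pos (convex_Icc 0 x)
    · apply continuousOn_of_forall_continuousAt
      intro y hy
      have h1 : (0:ℝ) < 1 + y := by nlinarith [hy.1, hy.2]
      have h2 : (0:ℝ) < 1 - y := by nlinarith [hy.1, hy.2]
      exact (((Real.continuousAt_log h1.ne').comp (by fun_prop)).sub
        ((Real.continuousAt_log h2.ne').comp (by fun_prop))).sub (by fun_prop)
    · intro y hy
      rw [interior_Icc] at hy
      have h1 : (0:ℝ) < 1 + y := by nlinarith [hy.1, hy.2]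
      have h2 : (0:ℝ) < 1 - y := by nlinarith [hy.1, hy.2]
      have d1 : HasDerivAt (fun y : ℝ => Real.log (1 + y)) (1 / (1 + y)) y := by
        simpa using ((hasDerivAt_id y).const_add 1).log h1.ne'
      have d2 : HasDerivAt (fun y : ℝ => Real.log (1 - y)) (-1 / (1 - y)) y := by
        simpa using ((hasDerivAt_id y).const_sub 1).log h2.ne'
      have d : HasDerivAt f (1 / (1 + y) - (-1) / (1 - y) - 2) y := by
        simpa [Pi.sub_def] using (d1.sub d2).sub ((hasDerivAt_id y).const_mul 2)
      rw [d.deriv]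
      have heq : 1 / (1 + y) - (-1) / (1 - y) - 2 = 2 * y ^ 2 / ((1 + y) * (1 - y)) := by
        field_simp; ring
      rw [heq]
      exact div_pos (by nlinarith [hy.1]) (by positivity)
  have h0 : f 0 = 0 := by simp [hf]
  have := key (Set.left_mem_Icc.2 hx.le) (Set.mem_Icc.2 ⟨hx.le, le_refl x⟩) hx
  rw [h0] at this
  simp only [hf] at this
  linarith

lemma artanh_lt (x : ℝ) (hx : 0 < x) (hx1 : x < 1) :
    3 * (1 - x ^ 2) * (Real.log (1 + x) - Real.log (1 - x)) < 6 * x - 4 * x ^ 3 := by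
  set g : ℝ → ℝ := fun y =>
    6 * y - 4 * y ^ 3 - 3 * (1 - y ^ 2) * (Real.log (1 + y) - Real.log (1 - y)) with hg
  have key : StrictMonoOn g (Set.Icc 0 x) := by
    apply strictMonoOn_of_deriv_pos (convex_Icc 0 x)
    · apply continuousOn_of_forall_continuousAt
      intro y hy
      have h1 : (0:ℝ) < 1 + y := by nlinarith [hy.1, hy.2]
      have h2 : (0:ℝ) < 1 - y := by nlinarith [hy.1, hy.2]
      have hc : ContinuousAt (fun y : ℝ => Real.log (1 + y) - Real.log (1 - y)) y :=
        ((Real.continuousAt_log h1.ne').comp (by fun_prop)).sub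
          ((Real.continuousAt_log h2.ne').comp (by fun_prop))
      exact ((by fun_prop : ContinuousAt (fun y : ℝ => 6 * y - 4 * y ^ 3) y)).sub
        ((by fun_prop : ContinuousAt (fun y : ℝ => 3 * (1 - y ^ 2)) y).mul hc)
    · intro y hy
      rw [interior_Icc] at hy
      have hy1 : y < 1 := lt_of_lt_of_le hy.2 hx1.le
      have h1 : (0:ℝ) < 1 + y := by nlinarith [hy.1]
      have h2 : (0:ℝ) < 1 - y := by nlinarith
      have d1 : HasDerivAt (fun y : ℝ => Real.log (1 + y)) (1 / (1 + y)) y := by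
        simpa using ((hasDerivAt_id y).const_add 1).log h1.ne'
      have d2 : HasDerivAt (fun y : ℝ => Real.log (1 - y)) (-1 / (1 - y)) y := by
        simpa using ((hasDerivAt_id y).const_sub 1).log h2.ne'
      have dL : HasDerivAt (fun y : ℝ => Real.log (1 + y) - Real.log (1 - y))
          (1 / (1 + y) - (-1) / (1 - y)) y := d1.sub d2
      have dP : HasDerivAt (fun y : ℝ => 3 * (1 - y ^ 2)) (3 * (-(2 * y))) y := by
        have : HasDerivAt (fun y : ℝ => 1 - y ^ 2) (-(2 * y)) y := by
          simpa using ((hasDerivAt_pow 2 y).const_sub 1)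
        simpa using this.const_mul 3
      have dQ : HasDerivAt (fun y : ℝ => 6 * y - 4 * y ^ 3) (6 - 4 * (3 * y ^ 2)) y := by
        simpa [Pi.sub_def] using (((hasDerivAt_id y).const_mul 6)).sub ((hasDerivAt_pow 3 y).const_mul 4)
      have d : HasDerivAt g (6 - 4 * (3 * y ^ 2) -
          (3 * (-(2 * y)) * (Real.log (1 + y) - Real.log (1 - y)) +
            3 * (1 - y ^ 2) * (1 / (1 + y) - (-1) / (1 - y)))) y := dQ.sub (dP.mul dL)
      rw [d.deriv]
      have hsimp : 3 * (1 - y ^ 2) * (1 / (1 + y) - (-1) / (1 - y)) = 6 := by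
        field_simp; ring
      rw [hsimp]
      have hA := artanh_gt y hy.1 hy1
      nlinarith [hy.1]
  have h0 : g 0 = 0 := by simp [hg]
  have := key (Set.left_mem_Icc.2 hx.le) (Set.mem_Icc.2 ⟨hx.le, le_refl x⟩) hx
  rw [h0] at this
  simp only [hg] at this
  linarith

/-- For a prolate spheroid with semi-axes `a < b` (rotation axis `b`) and eccentricity `e`
with `e² = 1 - a²/b²`, the form-factor
`L₁ = ((1-e²)/e²)(-1 + (1/(2e)) log((1+e)/(1-e)))` satisfies `0 < L₁ < 1/3`. -/
theorem prolate_form_factor_bounds (a b e : ℝ) (ha : 0 < a) (hab : a < b)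
    (he_pos : 0 < e) (he : e ^ 2 = 1 - a ^ 2 / b ^ 2) :
    0 < (1 - e ^ 2) / e ^ 2 * (-1 + 1 / (2 * e) * Real.log ((1 + e) / (1 - e))) ∧
    (1 - e ^ 2) / e ^ 2 * (-1 + 1 / (2 * e) * Real.log ((1 + e) / (1 - e))) < 1 / 3 := by
  have hb : 0 < b := ha.trans hab
  have he2 : e ^ 2 < 1 := by
    rw [he]
    have : 0 < a ^ 2 / b ^ 2 := by positivity
    linarith
  have he1 : e < 1 := by nlinarith
  have h1 : (0:ℝ) < 1 + e := by linarith
  have h2 : (0:ℝ) < 1 - e := by linarith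
  have hlog : Real.log ((1 + e) / (1 - e)) = Real.log (1 + e) - Real.log (1 - e) :=
    Real.log_div h1.ne' h2.ne'
  set T := Real.log (1 + e) - Real.log (1 - e) with hT
  have hA := artanh_gt e he_pos he1
  have hB := artanh_lt e he_pos he1
  rw [hlog]
  have hrw : (1 - e ^ 2) / e ^ 2 * (-1 + 1 / (2 * e) * T)
      = (1 - e ^ 2) * (T - 2 * e) / (2 * e ^ 3) := by
    field_simp
    ring
  rw [hrw]
  constructor
  · apply div_pos (by nlinarith) (by positivity)
  · rw [div_lt_div_iff₀ (by positivity) (by norm_num)]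
    nlinarith
end

section
/- For an oblate spheroid with eccentricity e ∈ (0,1), e² = 1 - b²/a², the form-factor L₁ = (1/e²)(1 - (√(1-e²)/e)·arcsin(e)) satisfies 1/3 < L₁ < 1. -/
lemma arcsin_gt (x : ℝ) (hx0 : 0 < x) (hx1 : x < 1) : x < Real.arcsin x := by
  have h1 : 0 < Real.arcsin x := Real.arcsin_pos.2 hx0
  have h2 := Real.sin_lt h1
  rwa [Real.sin_arcsin (by linarith) (le_of_lt hx1)] at h2

lemma key_ineq (x : ℝ) (hx0 : 0 < x) (hx1 : x < 1) :
    Real.sqrt (1 - x ^ 2) * Real.arcsin x < x - x ^ 3 / 3 := by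
  set g : ℝ → ℝ := fun x => x - x ^ 3 / 3 - Real.sqrt (1 - x ^ 2) * Real.arcsin x with hg
  have hmono : StrictMonoOn g (Set.Icc 0 1) := by
    apply strictMonoOn_of_deriv_pos (convex_Icc 0 1)
    · apply Continuous.continuousOn
      have : Continuous fun z : ℝ => z - z ^ 3 / 3 - Real.sqrt (1 - z ^ 2) * Real.arcsin z := by
        apply Continuous.sub
        · exact continuous_id.sub ((continuous_pow 3).div_const 3)
        · exact ((continuous_const.sub (continuous_pow 2)).sqrt).mul Real.continuous_arcsin
      exact this
    · intro y hy
      rw [interior_Icc] at hy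
      obtain ⟨hy0, hy1⟩ := hy
      have h2 : 0 < 1 - y ^ 2 := by nlinarith
      have hs : 0 < Real.sqrt (1 - y ^ 2) := Real.sqrt_pos.2 h2
      have hd1 : HasDerivAt (fun z : ℝ => Real.sqrt (1 - z ^ 2))
          (-y / Real.sqrt (1 - y ^ 2)) y := by
        have hf : HasDerivAt (fun z : ℝ => 1 - z ^ 2) (-(2 * y)) y := by
          simpa using ((hasDerivAt_pow 2 y).const_sub 1)
        have := (Real.hasDerivAt_sqrt (ne_of_gt h2)).comp y hf
        refine this.congr_deriv ?_
        field_simp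
      have hd2 : HasDerivAt Real.arcsin (1 / Real.sqrt (1 - y ^ 2)) y :=
        Real.hasDerivAt_arcsin (by linarith) (ne_of_lt hy1)
      have hd3 : HasDerivAt (fun z : ℝ => z - z ^ 3 / 3) (1 - y ^ 2) y := by
        have := (hasDerivAt_id y).sub ((hasDerivAt_pow 3 y).div_const 3)
        refine this.congr_deriv ?_
        ring
      have hdg : HasDerivAt g
          (1 - y ^ 2 - (-y / Real.sqrt (1 - y ^ 2) * Real.arcsin y +
            Real.sqrt (1 - y ^ 2) * (1 / Real.sqrt (1 - y ^ 2)))) y :=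
        hd3.sub (hd1.mul hd2)
      rw [hdg.deriv]
      have hss : Real.sqrt (1 - y ^ 2) * (1 / Real.sqrt (1 - y ^ 2)) = 1 := by
        field_simp
      rw [hss]
      have hAy : y < Real.arcsin y := arcsin_gt y hy0 hy1
      have hs1 : Real.sqrt (1 - y ^ 2) < 1 := by
        have := Real.sqrt_lt_sqrt (le_of_lt h2) (show 1 - y ^ 2 < 1 by nlinarith)
        simpa using this
      have hkey : y * Real.sqrt (1 - y ^ 2) < Real.arcsin y := by nlinarith
      have hA2 : y ^ 2 < y * Real.arcsin y / Real.sqrt (1 - y ^ 2) := by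
        rw [lt_div_iff₀ hs]; nlinarith
      have key2 : 1 - y ^ 2 - (-y / Real.sqrt (1 - y ^ 2) * Real.arcsin y + 1) =
          y * Real.arcsin y / Real.sqrt (1 - y ^ 2) - y ^ 2 := by ring
      rw [key2]
      linarith
  have h0 : g 0 = 0 := by simp [hg]
  have hx := hmono (Set.mem_Icc.2 ⟨le_refl 0, by norm_num⟩)
    (Set.mem_Icc.2 ⟨le_of_lt hx0, le_of_lt hx1⟩) hx0
  rw [h0] at hx
  simp only [hg] at hx
  linarith

/-- For an oblate spheroid with eccentricity `e ∈ (0,1)`, the form-factor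
`L₁ = (1/e²)(1 - (√(1-e²)/e) arcsin e)` satisfies `1/3 < L₁ < 1`. -/
theorem oblate_form_factor_bounds (e : ℝ) (he₀ : 0 < e) (he₁ : e < 1) :
    1 / 3 < 1 / e ^ 2 * (1 - Real.sqrt (1 - e ^ 2) / e * Real.arcsin e) ∧
    1 / e ^ 2 * (1 - Real.sqrt (1 - e ^ 2) / e * Real.arcsin e) < 1 := by
  set s := Real.sqrt (1 - e ^ 2) with hs
  set A := Real.arcsin e with hA
  have h2 : (0:ℝ) < 1 - e ^ 2 := by nlinarith
  have hspos : 0 < s := Real.sqrt_pos.2 h2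
  have hs2 : s ^ 2 = 1 - e ^ 2 := Real.sq_sqrt (le_of_lt h2)
  have hs1 : s < 1 := by nlinarith
  have hAe : e < A := arcsin_gt e he₀ he₁
  have hlow : s * A < e - e ^ 3 / 3 := key_ineq e he₀ he₁
  have hup : e - e ^ 3 < s * A := by nlinarith
  have hEq : 1 / e ^ 2 * (1 - s / e * A) = (e - s * A) / e ^ 3 := by
    rw [eq_div_iff (by positivity : (e:ℝ) ^ 3 ≠ 0)]
    field_simp
  have he3 : (0:ℝ) < e ^ 3 := by positivity
  constructor
  · rw [hEq, lt_div_iff₀ he3]; nlinarith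
  · rw [hEq, div_lt_iff₀ he3]; nlinarith
end

section
/- The prolate spheroid form-factor L₁(e) = ((1-e²)/e²)(-1 + (1/(2e))ln((1+e)/(1-e))) is strictly decreasing on (0,1). -/
open Real Set

/-- Derivative of `log(1+x) - log(1-x)` for `-1 < x < 1`. -/
lemma hasDerivAt_Lfun {x : ℝ} (h1 : -1 < x) (h2 : x < 1) :
    HasDerivAt (fun y : ℝ => Real.log (1 + y) - Real.log (1 - y))
      (2 / (1 - x ^ 2)) x := by
  have hp : (0:ℝ) < 1 + x := by linarith
  have hm : (0:ℝ) < 1 - x := by linarith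
  have h1' : HasDerivAt (fun y : ℝ => Real.log (1 + y)) (1 / (1 + x)) x := by
    have := ((hasDerivAt_id x).const_add 1).log hp.ne'
    simpa using this
  have h2' : HasDerivAt (fun y : ℝ => Real.log (1 - y)) (-1 / (1 - x)) x := by
    have := ((hasDerivAt_const x (1:ℝ)).sub (hasDerivAt_id x)).log hm.ne'
    simpa using this
  have hden : (1 - x ^ 2) ≠ 0 := by nlinarith
  have heq : 1 / (1 + x) - -1 / (1 - x) = 2 / (1 - x ^ 2) := by
    field_simp
    ring
  exact heq ▸ (h1'.sub h2')

lemma log_lt_aux {e : ℝ} (he0 : 0 < e) (he1 : e < 1) :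
    Real.log (1 + e) - Real.log (1 - e) < 2 * e / (1 - e ^ 2) := by
  set g : ℝ → ℝ := fun x => 2 * x / (1 - x ^ 2) - (Real.log (1 + x) - Real.log (1 - x)) with hg
  have key : StrictMonoOn g (Icc 0 e) := by
    apply strictMonoOn_of_deriv_pos (convex_Icc 0 e)
    · apply ContinuousOn.sub
      · apply ContinuousOn.div (by fun_prop)
        · fun_prop
        · intro x hx
          simp only [mem_Icc] at hx
          nlinarith [hx.1, hx.2]
      · apply ContinuousOn.sub
        · apply ContinuousOn.log (by fun_prop)
          intro x hx; simp only [mem_Icc] at hx; nlinarith [hx.1]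
        · apply ContinuousOn.log (by fun_prop)
          intro x hx; simp only [mem_Icc] at hx; nlinarith [hx.2]
    · intro x hx
      rw [interior_Icc] at hx
      obtain ⟨hx0, hxe⟩ := hx
      have hx1 : x < 1 := lt_trans hxe he1
      have hden : (0:ℝ) < 1 - x ^ 2 := by nlinarith
      have hq : HasDerivAt (fun y : ℝ => 1 - y ^ 2) (-(2 * x)) x := by
        simpa using (hasDerivAt_pow 2 x).const_sub 1
      have hp' : HasDerivAt (fun y : ℝ => 2 * y) 2 x := by
        simpa using (hasDerivAt_id x).const_mul 2
      have hd1 : HasDerivAt (fun y : ℝ => 2 * y / (1 - y ^ 2))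
          ((2 * (1 - x ^ 2) - 2 * x * (-(2 * x))) / (1 - x ^ 2) ^ 2) x :=
        hp'.div hq hden.ne' 
      have hd2 := hasDerivAt_Lfun (by linarith : (-1:ℝ) < x) hx1
      have hd : HasDerivAt g ((2 * (1 - x ^ 2) - 2 * x * (-(2 * x))) / (1 - x ^ 2) ^ 2
          - 2 / (1 - x ^ 2)) x := hd1.sub hd2
      rw [hd.deriv]
      rw [div_sub_div _ _ (by positivity) hden.ne']
      apply div_pos
      · nlinarith [mul_pos (mul_pos hx0 hx0) hden]
      · positivity
  have h0 : g 0 < g e := key (left_mem_Icc.2 he0.le) (right_mem_Icc.2 he0.le) he0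
  simp only [hg] at h0
  norm_num at h0
  linarith

lemma log_gt_aux {e : ℝ} (he0 : 0 < e) (he1 : e < 1) :
    6 * e < (3 - e ^ 2) * (Real.log (1 + e) - Real.log (1 - e)) := by
  set f : ℝ → ℝ := fun x => (3 - x ^ 2) * (Real.log (1 + x) - Real.log (1 - x)) - 6 * x with hf
  have key : StrictMonoOn f (Icc 0 e) := by
    apply strictMonoOn_of_deriv_pos (convex_Icc 0 e)
    · apply ContinuousOn.sub _ (by fun_prop)
      apply ContinuousOn.mul (by fun_prop)
      apply ContinuousOn.sub
      · apply ContinuousOn.log (by fun_prop)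
        intro x hx; simp only [mem_Icc] at hx; nlinarith [hx.1]
      · apply ContinuousOn.log (by fun_prop)
        intro x hx; simp only [mem_Icc] at hx; nlinarith [hx.2]
    · intro x hx
      rw [interior_Icc] at hx
      obtain ⟨hx0, hxe⟩ := hx
      have hx1 : x < 1 := lt_trans hxe he1
      have hden : (0:ℝ) < 1 - x ^ 2 := by nlinarith
      have hq : HasDerivAt (fun y : ℝ => 3 - y ^ 2) (-(2 * x)) x := by
        simpa using (hasDerivAt_pow 2 x).const_sub 3
      have hL := hasDerivAt_Lfun (by linarith : (-1:ℝ) < x) hx1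
      have h6 : HasDerivAt (fun y : ℝ => 6 * y) 6 x := by
        simpa using (hasDerivAt_id x).const_mul 6
      have hd : HasDerivAt f
          ((-(2 * x)) * (Real.log (1 + x) - Real.log (1 - x))
            + (3 - x ^ 2) * (2 / (1 - x ^ 2)) - 6) x :=
        (hq.mul hL).sub h6
      rw [hd.deriv]
      have hlt := log_lt_aux hx0 hx1
      have h2 : 2 * x * (Real.log (1 + x) - Real.log (1 - x)) < 2 * x * (2 * x / (1 - x ^ 2)) :=
        mul_lt_mul_of_pos_left hlt (by linarith)
      have h3 : (3 - x ^ 2) * (2 / (1 - x ^ 2)) - 6 = 2 * x * (2 * x / (1 - x ^ 2)) := by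
        field_simp
        ring
      linarith
  have h0 : f 0 < f e := key (left_mem_Icc.2 he0.le) (right_mem_Icc.2 he0.le) he0
  simp only [hf] at h0
  norm_num at h0
  linarith

lemma hasDerivAt_F {x : ℝ} (hx : x ∈ Ioo (0:ℝ) 1) :
    HasDerivAt
      (fun e : ℝ => (1 - e ^ 2) / e ^ 2 * (-1 + 1 / (2 * e) * Real.log ((1 + e) / (1 - e))))
      ((6 * x - (3 - x ^ 2) * (Real.log (1 + x) - Real.log (1 - x))) / (2 * x ^ 4)) x := by
  obtain ⟨hx0, hx1⟩ := hx
  have hden : (0:ℝ) < 1 - x ^ 2 := by nlinarith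
  have hq : HasDerivAt (fun y : ℝ => 1 - y ^ 2) (-(2 * x)) x := by
    simpa using (hasDerivAt_pow 2 x).const_sub 1
  have hx2 : HasDerivAt (fun y : ℝ => y ^ 2) (2 * x) x := by
    simpa using hasDerivAt_pow 2 x
  have hu : HasDerivAt (fun y : ℝ => (1 - y ^ 2) / y ^ 2)
      ((-(2 * x) * x ^ 2 - (1 - x ^ 2) * (2 * x)) / (x ^ 2) ^ 2) x :=
    hq.div hx2 (by positivity)
  have hp' : HasDerivAt (fun y : ℝ => 2 * y) 2 x := by
    simpa using (hasDerivAt_id x).const_mul 2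
  have hw : HasDerivAt (fun y : ℝ => 1 / (2 * y)) ((0 * (2 * x) - 1 * 2) / (2 * x) ^ 2) x :=
    (hasDerivAt_const x 1).div hp' (by positivity)
  have hL := hasDerivAt_Lfun (by linarith : (-1:ℝ) < x) hx1
  have hv : HasDerivAt
      (fun y : ℝ => -1 + 1 / (2 * y) * (Real.log (1 + y) - Real.log (1 - y)))
      ((0 * (2 * x) - 1 * 2) / (2 * x) ^ 2 * (Real.log (1 + x) - Real.log (1 - x))
        + 1 / (2 * x) * (2 / (1 - x ^ 2))) x :=
    (hw.mul hL).const_add (-1)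
  have htot := hu.mul hv
  have hEq : (fun e : ℝ => (1 - e ^ 2) / e ^ 2 * (-1 + 1 / (2 * e) * Real.log ((1 + e) / (1 - e))))
      =ᶠ[nhds x] (fun y : ℝ => (1 - y ^ 2) / y ^ 2
        * (-1 + 1 / (2 * y) * (Real.log (1 + y) - Real.log (1 - y)))) := by
    filter_upwards [Ioo_mem_nhds hx0 hx1] with y hy
    have h1 : (0:ℝ) < 1 + y := by linarith [hy.1]
    have h2 : (0:ℝ) < 1 - y := by linarith [hy.2]
    rw [Real.log_div h1.ne' h2.ne']
  have := HasDerivAt.congr_of_eventuallyEq htot hEq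
  refine this.congr_deriv ?_
  have hx0' : x ≠ 0 := hx0.ne'
  have hden' : 1 - x ^ 2 ≠ 0 := hden.ne'
  field_simp
  ring

/-- The prolate spheroid form-factor is strictly decreasing on `(0,1)`. -/
theorem prolate_form_factor_strictAntiOn :
    StrictAntiOn
      (fun e : ℝ => (1 - e ^ 2) / e ^ 2 * (-1 + 1 / (2 * e) * Real.log ((1 + e) / (1 - e))))
      (Set.Ioo 0 1) := by
  apply strictAntiOn_of_deriv_neg (convex_Ioo 0 1)
  · exact fun x hx => (hasDerivAt_F hx).continuousAt.continuousWithinAt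
  · intro x hx
    rw [interior_Ioo] at hx
    rw [(hasDerivAt_F hx).deriv]
    apply div_neg_of_neg_of_pos
    · linarith [log_gt_aux hx.1 hx.2]
    · have := hx.1
      positivity
end

section
/- The polarizability per unit material volume of a hollow sphere, ᾱ(f) = 3(m²-1)(2m²+1)/((m²+2)(2m²+1) - 2(m²-1)²f), with vacuum volume fraction f ∈ [0,1), can be written as a weighted sum of two ellipsoid-type terms: ᾱ(f) = w₁·(m²-1)/(1+L₁(m²-1)) + w₂·(m²-1)/(1+L₂(m²-1)), where L₁ = 1/2 - √(8f+1)/6, L₂ = 1/2 + √(8f+1)/6, w₁ = 1/2 + 1/(2√(8f+1)), w₂ = 1/2 - 1/(2√(8f+1)). -/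
/-- The hollow-sphere polarizability per unit volume decomposes into two ellipsoid-type
terms with form-factors `L₁ = 1/2 - √(8f+1)/6`, `L₂ = 1/2 + √(8f+1)/6` and weights
`w₁ = 1/2 + 1/(2√(8f+1))`, `w₂ = 1/2 - 1/(2√(8f+1))`. -/
theorem hollow_sphere_polarizability_decomposition (m : ℂ) (f : ℝ)
    (hf0 : 0 ≤ f) (hf1 : f < 1)
    (hden : (m ^ 2 + 2) * (2 * m ^ 2 + 1) - 2 * (m ^ 2 - 1) ^ 2 * (f : ℂ) ≠ 0)
    (h1 : 1 + ((1 / 2 - Real.sqrt (8 * f + 1) / 6 : ℝ) : ℂ) * (m ^ 2 - 1) ≠ 0)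
    (h2 : 1 + ((1 / 2 + Real.sqrt (8 * f + 1) / 6 : ℝ) : ℂ) * (m ^ 2 - 1) ≠ 0) :
    3 * (m ^ 2 - 1) * (2 * m ^ 2 + 1) /
        ((m ^ 2 + 2) * (2 * m ^ 2 + 1) - 2 * (m ^ 2 - 1) ^ 2 * (f : ℂ)) =
      ((1 / 2 + 1 / (2 * Real.sqrt (8 * f + 1)) : ℝ) : ℂ) * (m ^ 2 - 1) /
          (1 + ((1 / 2 - Real.sqrt (8 * f + 1) / 6 : ℝ) : ℂ) * (m ^ 2 - 1)) +
        ((1 / 2 - 1 / (2 * Real.sqrt (8 * f + 1)) : ℝ) : ℂ) * (m ^ 2 - 1) /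
          (1 + ((1 / 2 + Real.sqrt (8 * f + 1) / 6 : ℝ) : ℂ) * (m ^ 2 - 1)) := by
  have hpos : (0:ℝ) < 8 * f + 1 := by linarith
  have hs0 : Real.sqrt (8 * f + 1) ≠ 0 := ne_of_gt (Real.sqrt_pos.mpr hpos)
  have hs2 : (Real.sqrt (8 * f + 1) : ℝ) ^ 2 = 8 * f + 1 := Real.sq_sqrt hpos.le
  push_cast at h1 h2 ⊢
  obtain ⟨s, hsdef⟩ : ∃ s : ℂ, ((Real.sqrt (8 * f + 1) : ℝ) : ℂ) = s := ⟨_, rfl⟩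
  rw [hsdef] at h1 h2 ⊢
  have hsC : s ≠ 0 := by rw [← hsdef]; exact_mod_cast hs0
  have hs2C : s ^ 2 = 8 * (f:ℂ) + 1 := by rw [← hsdef]; exact_mod_cast hs2
  have hfval : (f:ℂ) = (s ^ 2 - 1) / 8 := by rw [hs2C]; ring
  rw [hfval] at hden ⊢
  field_simp
  have hA : 2 * s * (2 * 6 + (6 - 2 * s) * (m ^ 2 - 1)) ≠ 0 := by
    refine mul_ne_zero (mul_ne_zero two_ne_zero hsC) ?_
    intro h; exact h1 (by linear_combination h / 12)
  have hB : 2 * s * (2 * 6 + (6 + s * 2) * (m ^ 2 - 1)) ≠ 0 := by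
    refine mul_ne_zero (mul_ne_zero two_ne_zero hsC) ?_
    intro h; exact h2 (by linear_combination h / 12)
  have hD : (m ^ 2 + 2) * (2 * m ^ 2 + 1) * 8 - 2 * (m ^ 2 - 1) ^ 2 * (s ^ 2 - 1) ≠ 0 := by
    intro h; exact hden (by linear_combination h / 8)
  have hA' : (2 * 6 + (m ^ 2 - 1) * (6 - 2 * s)) ≠ 0 := by
    intro h; exact h1 (by linear_combination h / 12)
  have hB' : (2 * 6 + (m ^ 2 - 1) * (6 + 2 * s)) ≠ 0 := by
    intro h; exact h2 (by linear_combination h / 12)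
  have hD' : (m ^ 2 * 2 + 1) * (m ^ 2 + 2) * 8 - (m ^ 2 - 1) ^ 2 * 2 * (s ^ 2 - 1) ≠ 0 := by
    intro h; exact hden (by linear_combination h / 8)
  rw [div_add_div _ _ hA' hB', ← mul_div_assoc, div_eq_div_iff hD' (mul_ne_zero hA' hB')]
  ring
end

section
/- For the DHS, uniformly averaging over f ∈ [0,1) the measure w₁(f)δ_{L₁(f)} + w₂(f)δ_{L₂(f)}, with L₁ = 1/2-√(8f+1)/6, L₂ = 1/2+√(8f+1)/6, w₁ = 1/2+1/(2√(8f+1)), w₂ = 1/2-1/(2√(8f+1)), yields the density P(L) = (3/2)|2-3L| on [0,1/3]∪[2/3,1]: i.e. for any continuous g on [0,1], ∫₀¹ [w₁(f)g(L₁(f)) + w₂(f)g(L₂(f))] df = ∫_{[0,1/3]∪[2/3,1]} g(L)·(3/2)|2-3L| dL. -/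
open MeasureTheory

private lemma dhs_cont_aux {g : ℝ → ℝ} (hg : ContinuousOn g (Set.Icc (0 : ℝ) 1))
    (c d : ℝ) (h : ∀ u ∈ Set.Icc (1:ℝ) 3, c + d * u ∈ Set.Icc (0:ℝ) 1) :
    ContinuousOn (fun u : ℝ => g (c + d * u)) (Set.Icc (1:ℝ) 3) :=
  hg.comp (by fun_prop) h

/-- Uniformly averaging over `f ∈ [0,1)` the two weighted form-factor contributions of a
hollow sphere yields the DHS density `(3/2)|2-3L|` on `[0,1/3] ∪ [2/3,1]`: for any `g`
continuous on `[0,1]`,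
`∫₀¹ (w₁(f) g(L₁(f)) + w₂(f) g(L₂(f))) df = ∫_{[0,1/3]∪[2/3,1]} g(L) (3/2)|2-3L| dL`. -/
theorem dhs_averaging_identity (g : ℝ → ℝ) (hg : ContinuousOn g (Set.Icc (0 : ℝ) 1)) :
    ∫ f in (0 : ℝ)..1,
        ((1 / 2 + 1 / (2 * Real.sqrt (8 * f + 1))) * g (1 / 2 - Real.sqrt (8 * f + 1) / 6) +
          (1 / 2 - 1 / (2 * Real.sqrt (8 * f + 1))) * g (1 / 2 + Real.sqrt (8 * f + 1) / 6)) =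
      ∫ L in Set.Icc (0 : ℝ) (1 / 3) ∪ Set.Icc (2 / 3 : ℝ) 1,
        g L * (3 / 2 * |2 - 3 * L|) := by
  have huIcc : Set.uIcc (1:ℝ) 3 = Set.Icc (1:ℝ) 3 := Set.uIcc_of_le (by norm_num)
  set F : ℝ → ℝ := fun f =>
      ((1 / 2 + 1 / (2 * Real.sqrt (8 * f + 1))) * g (1 / 2 - Real.sqrt (8 * f + 1) / 6) +
        (1 / 2 - 1 / (2 * Real.sqrt (8 * f + 1))) * g (1 / 2 + Real.sqrt (8 * f + 1) / 6))
    with hF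
  set gt : ℝ → ℝ := fun L => g L * (3 / 2 * |2 - 3 * L|) with hgt
  -- continuity of the two composed g's on [1,3]
  have hcA : ContinuousOn (fun u : ℝ => g (1/2 - u/6)) (Set.Icc (1:ℝ) 3) := by
    have := dhs_cont_aux hg (1/2) (-(1/6)) (fun u hu => by
      obtain ⟨h1, h3⟩ := hu; constructor <;> [nlinarith; nlinarith])
    simpa [sub_eq_add_neg, neg_mul, mul_comm, div_eq_mul_inv] using this
  have hcB : ContinuousOn (fun u : ℝ => g (1/2 + u/6)) (Set.Icc (1:ℝ) 3) := by
    have := dhs_cont_aux hg (1/2) (1/6) (fun u hu => by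
      obtain ⟨h1, h3⟩ := hu; constructor <;> [nlinarith; nlinarith])
    simpa [mul_comm, div_eq_mul_inv] using this
  -- sqrt facts
  have hsq : ∀ u : ℝ, u ∈ Set.Icc (1:ℝ) 3 → Real.sqrt (8 * ((u^2 - 1)/8) + 1) = u := by
    intro u hu
    have : 8 * ((u^2 - 1)/8) + 1 = u^2 := by ring
    rw [this, Real.sqrt_sq (by linarith [hu.1])]
  -- Step A: LHS = ∫ u in 1..3, (u+1)/8 * g(1/2-u/6) + (u-1)/8 * g(1/2+u/6)
  have hsub1 : (∫ u in (1:ℝ)..3, (u/4) • (F ∘ (fun u => (u^2 - 1)/8)) u)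
      = ∫ f in (0:ℝ)..1, F f := by
    have h1 := intervalIntegral.integral_comp_smul_deriv' (a := 1) (b := 3)
      (f := fun u => (u^2 - 1)/8) (f' := fun u => u/4) (g := F)
      (fun x _ => by
        have h := ((hasDerivAt_pow 2 x).sub_const 1).div_const 8
        refine h.congr_deriv ?_
        push_cast
        ring)
      (by fun_prop)
      ?_
    · simpa [show ((3:ℝ)^2-1)/8 = 1 by norm_num, show ((1:ℝ)^2-1)/8 = 0 by norm_num] using h1
    · -- F continuous on the image
      have himg : (fun u : ℝ => (u^2 - 1)/8) '' Set.uIcc 1 3 ⊆ Set.Icc (0:ℝ) 1 := by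
        rw [huIcc]
        rintro _ ⟨u, hu, rfl⟩
        obtain ⟨h1, h3⟩ := hu
        constructor <;> nlinarith
      apply ContinuousOn.mono ?_ himg
      -- F continuous on [0,1]
      have hs : ContinuousOn (fun f : ℝ => Real.sqrt (8 * f + 1)) (Set.Icc (0:ℝ) 1) := by
        fun_prop
      have hsmem : ∀ f ∈ Set.Icc (0:ℝ) 1, Real.sqrt (8 * f + 1) ∈ Set.Icc (1:ℝ) 3 := by
        intro f hf
        have h0 : (0:ℝ) ≤ 8 * f + 1 := by linarith [hf.1]
        have hsq := Real.sq_sqrt h0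
        have hnn := Real.sqrt_nonneg (8 * f + 1)
        constructor
        · nlinarith [hf.1]
        · nlinarith [hf.2]
      have hsne : ∀ f ∈ Set.Icc (0:ℝ) 1, Real.sqrt (8 * f + 1) ≠ 0 := by
        intro f hf
        have := (hsmem f hf).1
        linarith
      have hgA : ContinuousOn (fun f : ℝ => g (1/2 - Real.sqrt (8 * f + 1)/6))
          (Set.Icc (0:ℝ) 1) := hcA.comp hs hsmem
      have hgB : ContinuousOn (fun f : ℝ => g (1/2 + Real.sqrt (8 * f + 1)/6))
          (Set.Icc (0:ℝ) 1) := hcB.comp hs hsmem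
      have hw : ContinuousOn (fun f : ℝ => 1 / (2 * Real.sqrt (8 * f + 1)))
          (Set.Icc (0:ℝ) 1) := by
        apply ContinuousOn.div continuousOn_const (by fun_prop)
        intro f hf
        have := hsne f hf
        positivity
      exact (((continuousOn_const.add hw).mul hgA).add
        ((continuousOn_const.sub hw).mul hgB))
  have hA : (∫ f in (0:ℝ)..1, F f)
      = ∫ u in (1:ℝ)..3, ((u+1)/8 * g (1/2 - u/6) + (u-1)/8 * g (1/2 + u/6)) := by
    rw [← hsub1]
    apply intervalIntegral.integral_congr
    intro u hu
    rw [huIcc] at hu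
    have hu1 := hu.1
    have hs := hsq u hu
    simp only [Function.comp, hF, smul_eq_mul, hs]
    have hune : u ≠ 0 := by linarith
    field_simp
    ring
  -- Step B: split RHS
  have hmeas2 : MeasurableSet (Set.Icc (2/3 : ℝ) 1) := measurableSet_Icc
  have hdisj : Disjoint (Set.Icc (0:ℝ) (1/3)) (Set.Icc (2/3:ℝ) 1) := by
    rw [Set.disjoint_left]
    rintro x ⟨_, hx2⟩ ⟨hx3, _⟩
    linarith
  have hint1 : IntegrableOn gt (Set.Icc (0:ℝ) (1/3)) := by
    apply ContinuousOn.integrableOn_Icc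
    exact (hg.mono (by intro x hx; exact ⟨hx.1, by linarith [hx.2]⟩)).mul (by fun_prop)
  have hint2 : IntegrableOn gt (Set.Icc (2/3:ℝ) 1) := by
    apply ContinuousOn.integrableOn_Icc
    exact (hg.mono (by intro x hx; exact ⟨by linarith [hx.1], hx.2⟩)).mul (by fun_prop)
  rw [hA, setIntegral_union hdisj hmeas2 hint1 hint2]
  -- convert set integrals to interval integrals
  have e1 : (∫ L in Set.Icc (0:ℝ) (1/3), gt L) = ∫ L in (0:ℝ)..(1/3), gt L := by
    rw [intervalIntegral.integral_of_le (by norm_num), integral_Icc_eq_integral_Ioc]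
  have e2 : (∫ L in Set.Icc (2/3:ℝ) 1, gt L) = ∫ L in (2/3:ℝ)..1, gt L := by
    rw [intervalIntegral.integral_of_le (by norm_num), integral_Icc_eq_integral_Ioc]
  rw [e1, e2]
  -- substitution for piece 1 : L = 1/2 - u/6
  have hp1 : (∫ L in (0:ℝ)..(1/3), gt L)
      = ∫ u in (1:ℝ)..3, (u+1)/8 * g (1/2 - u/6) := by
    have h1 := intervalIntegral.integral_comp_smul_deriv' (a := 1) (b := 3)
      (f := fun u => 1/2 - u/6) (f' := fun _ => -(1/6)) (g := gt)
      (fun x _ => ((hasDerivAt_id x).div_const 6).const_sub (1/2))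
      continuousOn_const
      (by
        apply ContinuousOn.mono ?_ ?_
        · exact Set.Icc (0:ℝ) (1/3)
        · exact (hg.mono (by intro x hx; exact ⟨hx.1, by linarith [hx.2]⟩)).mul (by fun_prop)
        · rw [huIcc]; rintro _ ⟨u, hu, rfl⟩
          obtain ⟨h1, h3⟩ := hu
          constructor <;> [linarith; linarith])
    simp only [Function.comp] at h1
    rw [show (1:ℝ)/2 - 1/6 = 1/3 by norm_num, show (1:ℝ)/2 - 3/6 = 0 by norm_num] at h1
    rw [intervalIntegral.integral_symm (1/3) 0, ← h1, ← intervalIntegral.integral_neg]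
    apply intervalIntegral.integral_congr
    intro u hu
    rw [huIcc] at hu
    have hu1 := hu.1
    simp only [hgt, smul_eq_mul]
    rw [show (2 - 3 * (1/2 - u/6)) = (u+1)/2 by ring, abs_of_nonneg (by linarith : (0:ℝ) ≤ (u+1)/2)]
    ring
  -- substitution for piece 2 : L = 1/2 + u/6
  have hp2 : (∫ L in (2/3:ℝ)..1, gt L)
      = ∫ u in (1:ℝ)..3, (u-1)/8 * g (1/2 + u/6) := by
    have h1 := intervalIntegral.integral_comp_smul_deriv' (a := 1) (b := 3)
      (f := fun u => 1/2 + u/6) (f' := fun _ => (1/6)) (g := gt)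
      (fun x _ => ((hasDerivAt_id x).div_const 6).const_add (1/2))
      continuousOn_const
      (by
        apply ContinuousOn.mono ?_ ?_
        · exact Set.Icc (2/3:ℝ) 1
        · exact (hg.mono (by intro x hx; exact ⟨by linarith [hx.1], hx.2⟩)).mul (by fun_prop)
        · rw [huIcc]; rintro _ ⟨u, hu, rfl⟩
          obtain ⟨h1, h3⟩ := hu
          constructor <;> [linarith; linarith])
    simp only [Function.comp] at h1
    rw [show (1:ℝ)/2 + 1/6 = 2/3 by norm_num, show (1:ℝ)/2 + 3/6 = 1 by norm_num] at h1
    rw [← h1]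
    apply intervalIntegral.integral_congr
    intro u hu
    rw [huIcc] at hu
    have hu1 := hu.1
    simp only [hgt, smul_eq_mul]
    rw [show (2 - 3 * (1/2 + u/6)) = (1-u)/2 by ring, abs_of_nonpos (by linarith : (1-u)/2 ≤ (0:ℝ))]
    ring
  rw [hp1, hp2, ← intervalIntegral.integral_add]
  · exact ContinuousOn.intervalIntegrable (by rw [huIcc]; exact (by fun_prop : ContinuousOn (fun u:ℝ => (u+1)/8) _).mul hcA)
  · exact ContinuousOn.intervalIntegrable (by rw [huIcc]; exact (by fun_prop : ContinuousOn (fun u:ℝ => (u-1)/8) _).mul hcB)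
end
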